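/- Let A, B, C be subspaces of a finite-dimensional vector space U over a field. Then DisCoord(A, B, C) equals each of the following: (1) dim(A ∩ B ∩ C) − I(A;B;C), where I(A;B;C) = dim(A+B+C) − dim(A+B) − dim(A+C) − dim(B+C) + dim A + dim B + dim C; (2) dim(C ∩ (A+B)) − dim(C ∩ A) − dim(C ∩ B) + dim(A ∩ B ∩ C); and (3) dim((A+C) ∩ (B+C)) − dim((A ∩ B) + C). -/

import Mathlib

/-- The discoordination of `X` with respect to the family `A`:
`Σ_i (dim A_i − |X ∩ A_i|)`. -/
noncomputable def disCoordX (𝔽 : Type*) [Field 𝔽] {U : Type*} [AddCommGroup U]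
    [Module 𝔽 U] {m : ℕ} (X : Set U) (A : Fin m → Submodule 𝔽 U) : ℕ :=
  ∑ i, (Module.finrank 𝔽 ↥(A i) - (X ∩ (A i : Set U)).ncard)

/-- The discoordination of the family `A₁, …, A_m`: the minimum of
`disCoordX` over all linearly independent subsets `X` of the ambient space. -/
noncomputable def DisCoord (𝔽 : Type*) [Field 𝔽] {U : Type*} [AddCommGroup U]
    [Module 𝔽 U] {m : ℕ} (A : Fin m → Submodule 𝔽 U) : ℕ :=
  sInf { n : ℕ | ∃ X : Set U, LinearIndependent 𝔽 (fun x : X => (x : U)) ∧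
    n = disCoordX 𝔽 X A }

set_option linter.unusedSectionVars false

open Submodule Set Module

section DCHelpers

variable {𝔽 U : Type*} [Field 𝔽] [AddCommGroup U] [Module 𝔽 U] [FiniteDimensional 𝔽 U]

lemma DC.step {b : Set U} (hb : LinearIndependent 𝔽 ((↑) : b → U)) (W : Submodule 𝔽 U) :
    ∃ b' : Set U, b ⊆ b' ∧ b' ⊆ b ∪ ↑W ∧ LinearIndependent 𝔽 ((↑) : b' → U) ∧
      span 𝔽 b' = span 𝔽 b ⊔ W := by
  obtain ⟨b', hb'sub, hbb', hspan, hli⟩ :=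
    exists_linearIndepOn_id_extension hb (Set.subset_union_left : b ⊆ b ∪ ↑W)
  refine ⟨b', hbb', hb'sub, hli, le_antisymm ?_ (sup_le (span_mono hbb') ?_)⟩
  · calc span 𝔽 b' ≤ span 𝔽 (b ∪ ↑W) := span_mono hb'sub
      _ = span 𝔽 b ⊔ W := by rw [span_union, Submodule.span_eq]
  · intro x hx
    exact hspan (Or.inr hx)

lemma DC.base (W : Submodule 𝔽 U) :
    ∃ b : Set U, b ⊆ ↑W ∧ LinearIndependent 𝔽 ((↑) : b → U) ∧ span 𝔽 b = W := by
  obtain ⟨b, hbs, hsp, hli⟩ := exists_linearIndependent 𝔽 (W : Set U)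
  exact ⟨b, hbs, hli, by rw [hsp, Submodule.span_eq]⟩

lemma DC.disCoordX_eq (A B C : Submodule 𝔽 U) (X : Set U) :
    disCoordX 𝔽 X ![A, B, C] =
      (finrank 𝔽 A - (X ∩ (A : Set U)).ncard) + (finrank 𝔽 B - (X ∩ (B : Set U)).ncard) +
        (finrank 𝔽 C - (X ∩ (C : Set U)).ncard) := by
  simp [disCoordX, Fin.sum_univ_three, Matrix.vecHead, Matrix.vecTail]
  rfl

lemma DC.ncard_eq_finrank_span {s : Set U}
    (hs : LinearIndependent 𝔽 ((↑) : s → U)) :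
    s.ncard = finrank 𝔽 (span 𝔽 s) := by
  have hfin : s.Finite := hs.setFinite
  have := hfin.fintype
  rw [finrank_span_set_eq_card hs, Set.ncard_eq_toFinset_card']

lemma DC.ncard_le_finrank {s : Set U} (hs : LinearIndependent 𝔽 ((↑) : s → U))
    {W : Submodule 𝔽 U} (hsW : s ⊆ W) :
    s.ncard ≤ finrank 𝔽 W := by
  rw [DC.ncard_eq_finrank_span hs]
  exact Submodule.finrank_mono (span_le.mpr hsW)

-- span argument lemma
lemma DC.le_span_inter {b : Set U} {A W : Submodule 𝔽 U}
    (hA : A ≤ span 𝔽 b) (hdiff : b \ (A : Set U) ⊆ (W : Set U))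
    (hAW : A ⊓ W ≤ span 𝔽 (b ∩ (A : Set U))) :
    A ≤ span 𝔽 (b ∩ (A : Set U)) := by
  intro a ha
  have hb : b = (b ∩ (A : Set U)) ∪ (b \ (A : Set U)) := by
    ext x; by_cases hx : x ∈ (A : Set U) <;> simp [hx]
  have hsplit : span 𝔽 b = span 𝔽 (b ∩ (A : Set U)) ⊔ span 𝔽 (b \ (A : Set U)) := by
    nth_rewrite 1 [hb]
    rw [span_union]
  have ha' : a ∈ span 𝔽 (b ∩ (A : Set U)) ⊔ span 𝔽 (b \ (A : Set U)) := by
    rw [← hsplit]; exact hA ha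
  obtain ⟨u, hu, v, hv, huv⟩ := Submodule.mem_sup.mp ha'
  have huA : u ∈ A := by
    have : span 𝔽 (b ∩ (A : Set U)) ≤ A := span_le.mpr (fun x hx => hx.2)
    exact this hu
  have hvW : v ∈ W := (span_le.mpr hdiff) hv
  have hvA : v ∈ A := by
    have : v = a - u := by rw [← huv]; abel
    rw [this]; exact A.sub_mem ha huA
  have : v ∈ span 𝔽 (b ∩ (A : Set U)) := hAW ⟨hvA, hvW⟩
  rw [← huv]; exact add_mem hu this

open Submodule Set Module Classical in
lemma DC.ncard_inter_eq {U : Type*} {X : Set U} (hX : X.Finite) (S : Set U) :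
    (X ∩ S).ncard = (hX.toFinset.filter (· ∈ S)).card := by
  rw [← Set.ncard_coe_finset]
  congr 1
  ext x
  simp [Set.mem_inter_iff, and_comm]

open Submodule Set Module Classical in
lemma DC.count {𝔽 U : Type*} [Field 𝔽] [AddCommGroup U] [Module 𝔽 U] {X : Set U}
    (hX : X.Finite) (A B C : Submodule 𝔽 U) :
    (X ∩ (A : Set U)).ncard + (X ∩ (B : Set U)).ncard + (X ∩ (C : Set U)).ncard ≤
      (X ∩ ((A ⊓ B : Submodule 𝔽 U) : Set U)).ncard +
      (X ∩ (((A ⊓ C : Submodule 𝔽 U) : Set U) ∪ ((B ⊓ C : Submodule 𝔽 U) : Set U))).ncard +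
      (X ∩ ((A ⊔ B ⊔ C : Submodule 𝔽 U) : Set U)).ncard := by
  simp only [DC.ncard_inter_eq hX, Finset.card_filter]
  rw [← Finset.sum_add_distrib, ← Finset.sum_add_distrib,
      ← Finset.sum_add_distrib, ← Finset.sum_add_distrib]
  apply Finset.sum_le_sum
  intro x _
  simp only [Set.mem_union, SetLike.mem_coe, Submodule.mem_inf]
  have h3 : (x ∈ A ∨ x ∈ B ∨ x ∈ C) → x ∈ A ⊔ B ⊔ C := by
    rintro (h | h | h)
    · exact Submodule.mem_sup_left (Submodule.mem_sup_left h)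
    · exact Submodule.mem_sup_left (Submodule.mem_sup_right h)
    · exact Submodule.mem_sup_right h
  rcases _root_.em (x ∈ A ∨ x ∈ B ∨ x ∈ C) with hor | hor
  · have h3' := h3 hor
    by_cases hA : x ∈ A <;> by_cases hB : x ∈ B <;> by_cases hC : x ∈ C <;>
      simp [hA, hB, hC, h3']
  · push_neg at hor
    obtain ⟨hA, hB, hC⟩ := hor
    simp [hA, hB, hC]

lemma DC.lower (A B C : Submodule 𝔽 U) {X : Set U}
    (hX : LinearIndependent 𝔽 (fun x : X => (x : U))) :
    finrank 𝔽 ↥((A ⊔ C) ⊓ (B ⊔ C)) - finrank 𝔽 ↥((A ⊓ B) ⊔ C) ≤ disCoordX 𝔽 X ![A, B, C] := by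
  have hfin : X.Finite := hX.setFinite
  have hnA : (X ∩ (A : Set U)).ncard ≤ finrank 𝔽 ↥A :=
    DC.ncard_le_finrank (LinearIndepOn.mono (v := id) hX inter_subset_left) inter_subset_right
  have hnB : (X ∩ (B : Set U)).ncard ≤ finrank 𝔽 ↥B :=
    DC.ncard_le_finrank (LinearIndepOn.mono (v := id) hX inter_subset_left) inter_subset_right
  have hnC : (X ∩ (C : Set U)).ncard ≤ finrank 𝔽 ↥C :=
    DC.ncard_le_finrank (LinearIndepOn.mono (v := id) hX inter_subset_left) inter_subset_right
  have hm1 : (X ∩ ((A ⊓ B : Submodule 𝔽 U) : Set U)).ncard ≤ finrank 𝔽 ↥(A ⊓ B) :=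
    DC.ncard_le_finrank (LinearIndepOn.mono (v := id) hX inter_subset_left) inter_subset_right
  have hm2 : (X ∩ (((A ⊓ C : Submodule 𝔽 U) : Set U) ∪ ((B ⊓ C : Submodule 𝔽 U) : Set U))).ncard ≤
      finrank 𝔽 ↥((A ⊓ C) ⊔ (B ⊓ C)) := by
    refine DC.ncard_le_finrank (LinearIndepOn.mono (v := id) hX inter_subset_left) ?_
    rintro x ⟨-, hx | hx⟩
    · exact Submodule.mem_sup_left hx
    · exact Submodule.mem_sup_right hx
  have hm3 : (X ∩ ((A ⊔ B ⊔ C : Submodule 𝔽 U) : Set U)).ncard ≤ finrank 𝔽 ↥(A ⊔ B ⊔ C) :=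
    DC.ncard_le_finrank (LinearIndepOn.mono (v := id) hX inter_subset_left) inter_subset_right
  have hcount := DC.count hfin A B C
  have f1 := Submodule.finrank_sup_add_finrank_inf_eq A B
  have f2 := Submodule.finrank_sup_add_finrank_inf_eq A C
  have f3 := Submodule.finrank_sup_add_finrank_inf_eq B C
  have f4 := Submodule.finrank_sup_add_finrank_inf_eq (A ⊓ C) (B ⊓ C)
  have e4 : (A ⊓ C) ⊓ (B ⊓ C) = A ⊓ B ⊓ C := by
    ext x; simp only [Submodule.mem_inf]; tauto
  rw [e4] at f4
  have f6 := Submodule.finrank_sup_add_finrank_inf_eq (A ⊔ C) (B ⊔ C)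
  have e6 : (A ⊔ C) ⊔ (B ⊔ C) = A ⊔ B ⊔ C := by
    rw [sup_sup_sup_comm, sup_idem]
  rw [e6] at f6
  have f7 := Submodule.finrank_sup_add_finrank_inf_eq (A ⊓ B) C
  rw [DC.disCoordX_eq]
  omega

lemma DC.upper (A B C : Submodule 𝔽 U) :
    ∃ X : Set U, LinearIndependent 𝔽 (fun x : X => (x : U)) ∧
      disCoordX 𝔽 X ![A, B, C] ≤
        finrank 𝔽 ↥((A ⊔ C) ⊓ (B ⊔ C)) - finrank 𝔽 ↥((A ⊓ B) ⊔ C) := by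
  obtain ⟨b0, hb0sub, hli0, hspan0⟩ := DC.base (A ⊓ B ⊓ C)
  obtain ⟨b1, hb01, hb1sub, hli1, hspan1⟩ := DC.step hli0 (A ⊓ C)
  obtain ⟨b2, hb12, hb2sub, hli2, hspan2⟩ := DC.step hli1 (B ⊓ C)
  obtain ⟨b3, hb23, hb3sub, hli3, hspan3⟩ := DC.step hli2 (A ⊓ B)
  obtain ⟨b4, hb34, hb4sub, hli4, hspan4⟩ := DC.step hli3 A
  obtain ⟨b5, hb45, hb5sub, hli5, hspan5⟩ := DC.step hli4 B
  obtain ⟨b6, hb56, hb6sub, hli6, hspan6⟩ := DC.step hli5 C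
  -- span values
  rw [hspan0] at hspan1
  have e1 : A ⊓ B ⊓ C ⊔ A ⊓ C = A ⊓ C :=
    sup_eq_right.mpr (le_inf (inf_le_left.trans inf_le_left) inf_le_right)
  rw [e1] at hspan1
  rw [hspan1] at hspan2
  rw [hspan2] at hspan3
  rw [hspan3] at hspan4
  rw [hspan4] at hspan5
  have e5 : ((A ⊓ C ⊔ B ⊓ C) ⊔ A ⊓ B) ⊔ A ⊔ B = A ⊔ B := by
    apply le_antisymm
    · refine sup_le (sup_le (sup_le (sup_le ?_ ?_) ?_) le_sup_left) le_sup_right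
      · exact inf_le_left.trans le_sup_left
      · exact inf_le_left.trans le_sup_right
      · exact inf_le_left.trans le_sup_left
    · exact sup_le (le_sup_right.trans le_sup_left) le_sup_right
  rw [e5] at hspan5
  rw [hspan5] at hspan6
  -- memberships
  have hb0C : b0 ⊆ (C : Set U) := fun x hx => (hb0sub hx : x ∈ A ⊓ B ⊓ C).2
  have hb1C : b1 ⊆ (C : Set U) := fun x hx => by
    rcases hb1sub hx with h | h
    · exact hb0C h
    · exact (h : x ∈ A ⊓ C).2
  have hb2C : b2 ⊆ (C : Set U) := fun x hx => by
    rcases hb2sub hx with h | h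
    · exact hb1C h
    · exact (h : x ∈ B ⊓ C).2
  have hb04 : b0 ⊆ b4 := fun x hx => hb34 (hb23 (hb12 (hb01 hx)))
  have hb25 : b2 ⊆ b5 := fun x hx => hb45 (hb34 (hb23 hx))
  -- (X ∩ A).ncard ≥ finrank A
  have hspanA : span 𝔽 (b4 ∩ (A : Set U)) = A := by
    refine le_antisymm (span_le.mpr fun x hx => hx.2) ?_
    refine DC.le_span_inter (W := B ⊓ C) ?_ ?_ ?_
    · rw [hspan4]; exact le_sup_right
    · rintro x ⟨hx4, hxA⟩
      rcases hb4sub hx4 with hx3 | hxA'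
      · rcases hb3sub hx3 with hx2 | hxAB
        · rcases hb2sub hx2 with hx1 | hxBC
          · rcases hb1sub hx1 with hx0 | hxAC
            · exact absurd (hb0sub hx0 : x ∈ A ⊓ B ⊓ C).1.1 hxA
            · exact absurd (hxAC : x ∈ A ⊓ C).1 hxA
          · exact hxBC
        · exact absurd (hxAB : x ∈ A ⊓ B).1 hxA
      · exact absurd hxA' hxA
    · rw [← inf_assoc, ← hspan0]
      refine span_mono fun x hx => ⟨hb04 hx, (hb0sub hx : x ∈ A ⊓ B ⊓ C).1.1⟩
  -- A ⊓ B ≤ span (b3 ∩ A⊓B)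
  have hspanAB : A ⊓ B ≤ span 𝔽 (b3 ∩ ((A ⊓ B : Submodule 𝔽 U) : Set U)) := by
    refine DC.le_span_inter (W := C) ?_ ?_ ?_
    · rw [hspan3]; exact le_sup_right
    · rintro x ⟨hx3, hxAB⟩
      rcases hb3sub hx3 with hx2 | hxAB'
      · exact hb2C hx2
      · exact absurd hxAB' hxAB
    · rw [show (A ⊓ B) ⊓ C = A ⊓ B ⊓ C from rfl, ← hspan0]
      refine span_mono fun x hx => ⟨hb23 (hb12 (hb01 hx)), ?_⟩
      have h := (hb0sub hx : x ∈ A ⊓ B ⊓ C)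
      exact h.1
  have hspanB : span 𝔽 (b5 ∩ (B : Set U)) = B := by
    refine le_antisymm (span_le.mpr fun x hx => hx.2) ?_
    refine DC.le_span_inter (W := A) ?_ ?_ ?_
    · rw [hspan5]; exact le_sup_right
    · rintro x ⟨hx5, hxB⟩
      rcases hb5sub hx5 with hx4 | hxB'
      · rcases hb4sub hx4 with hx3 | hxA
        · rcases hb3sub hx3 with hx2 | hxAB
          · rcases hb2sub hx2 with hx1 | hxBC
            · rcases hb1sub hx1 with hx0 | hxAC
              · exact absurd (hb0sub hx0 : x ∈ A ⊓ B ⊓ C).1.2 hxB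
              · exact (hxAC : x ∈ A ⊓ C).1
            · exact absurd (hxBC : x ∈ B ⊓ C).1 hxB
          · exact absurd (hxAB : x ∈ A ⊓ B).2 hxB
        · exact hxA
      · exact absurd hxB' hxB
    · rw [inf_comm]
      refine hspanAB.trans (span_mono ?_)
      rintro x ⟨hx3, hxAB⟩
      exact ⟨hb45 (hb34 hx3), (hxAB : x ∈ A ⊓ B).2⟩
  -- finiteness
  have hfin6 : b6.Finite := hli6.setFinite
  have hfin5 : b5.Finite := hfin6.subset hb56
  -- cardinalities
  have c0 : b0.ncard = finrank 𝔽 ↥(A ⊓ B ⊓ C) := by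
    rw [DC.ncard_eq_finrank_span hli0, hspan0]
  have c2 : b2.ncard = finrank 𝔽 ↥(A ⊓ C ⊔ B ⊓ C) := by
    rw [DC.ncard_eq_finrank_span hli2, hspan2]
  have c5 : b5.ncard = finrank 𝔽 ↥(A ⊔ B) := by
    rw [DC.ncard_eq_finrank_span hli5, hspan5]
  have c6 : b6.ncard = finrank 𝔽 ↥(A ⊔ B ⊔ C) := by
    rw [DC.ncard_eq_finrank_span hli6, hspan6]
  have cA : (b4 ∩ (A : Set U)).ncard = finrank 𝔽 ↥A := by
    rw [DC.ncard_eq_finrank_span (LinearIndepOn.mono (v := id) hli4 inter_subset_left), hspanA]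
  have cB : (b5 ∩ (B : Set U)).ncard = finrank 𝔽 ↥B := by
    rw [DC.ncard_eq_finrank_span (LinearIndepOn.mono (v := id) hli5 inter_subset_left), hspanB]
  have nA : finrank 𝔽 ↥A ≤ (b6 ∩ (A : Set U)).ncard := by
    rw [← cA]
    exact Set.ncard_le_ncard (inter_subset_inter_left _ (fun x hx => hb56 (hb45 hx)))
      (hfin6.inter_of_left _)
  have nB : finrank 𝔽 ↥B ≤ (b6 ∩ (B : Set U)).ncard := by
    rw [← cB]
    exact Set.ncard_le_ncard (inter_subset_inter_left _ hb56) (hfin6.inter_of_left _)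
  have nC : b6.ncard ≤ (b6 ∩ (C : Set U)).ncard + (b5.ncard - b2.ncard) := by
    have hdiff : (b5 \ b2).ncard = b5.ncard - b2.ncard :=
      Set.ncard_diff hb25 (hfin5.subset hb25)
    rw [← hdiff]
    refine le_trans (Set.ncard_le_ncard ?_ ((hfin6.inter_of_left _).union
      (hfin5.subset Set.diff_subset))) (Set.ncard_union_le _ _)
    intro x hx
    by_cases h5 : x ∈ b5
    · by_cases h2 : x ∈ b2
      · exact Or.inl ⟨hx, hb2C h2⟩
      · exact Or.inr ⟨h5, h2⟩
    · rcases hb6sub hx with h | h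
      · exact absurd h h5
      · exact Or.inl ⟨hx, h⟩
  have c25 : b2.ncard ≤ b5.ncard := Set.ncard_le_ncard hb25 hfin5
  -- dimension identities
  have f1 := Submodule.finrank_sup_add_finrank_inf_eq A B
  have f2 := Submodule.finrank_sup_add_finrank_inf_eq A C
  have f3 := Submodule.finrank_sup_add_finrank_inf_eq B C
  have f4 := Submodule.finrank_sup_add_finrank_inf_eq (A ⊓ C) (B ⊓ C)
  have e4 : (A ⊓ C) ⊓ (B ⊓ C) = A ⊓ B ⊓ C := by
    ext x; simp only [Submodule.mem_inf]; tauto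
  rw [e4] at f4
  have f6 := Submodule.finrank_sup_add_finrank_inf_eq (A ⊔ C) (B ⊔ C)
  have e6 : (A ⊔ C) ⊔ (B ⊔ C) = A ⊔ B ⊔ C := by
    rw [sup_sup_sup_comm, sup_idem]
  rw [e6] at f6
  have f7 := Submodule.finrank_sup_add_finrank_inf_eq (A ⊓ B) C
  refine ⟨b6, hli6, ?_⟩
  rw [DC.disCoordX_eq]
  have hnA : (b6 ∩ (A : Set U)).ncard ≤ finrank 𝔽 ↥A :=
    DC.ncard_le_finrank (LinearIndepOn.mono (v := id) hli6 inter_subset_left) inter_subset_right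
  have hnB : (b6 ∩ (B : Set U)).ncard ≤ finrank 𝔽 ↥B :=
    DC.ncard_le_finrank (LinearIndepOn.mono (v := id) hli6 inter_subset_left) inter_subset_right
  have hnC : (b6 ∩ (C : Set U)).ncard ≤ finrank 𝔽 ↥C :=
    DC.ncard_le_finrank (LinearIndepOn.mono (v := id) hli6 inter_subset_left) inter_subset_right
  omega

lemma DC.disCoord_eq (A B C : Submodule 𝔽 U) :
    DisCoord 𝔽 ![A, B, C] =
      finrank 𝔽 ↥((A ⊔ C) ⊓ (B ⊔ C)) - finrank 𝔽 ↥((A ⊓ B) ⊔ C) := by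
  obtain ⟨X, hXli, hXle⟩ := DC.upper A B C
  have hmem : disCoordX 𝔽 X ![A, B, C] ∈
      { n : ℕ | ∃ Y : Set U, LinearIndependent 𝔽 (fun x : Y => (x : U)) ∧
        n = disCoordX 𝔽 Y ![A, B, C] } := ⟨X, hXli, rfl⟩
  apply le_antisymm
  · exact le_trans (Nat.sInf_le hmem) hXle
  · refine le_csInf ⟨_, hmem⟩ ?_
    rintro n ⟨Y, hY, rfl⟩
    exact DC.lower A B C hY


end DCHelpers

/-- Formulas for the discoordination of three subspaces:
(1) `DisCoord(A,B,C) = dim(A∩B∩C) − I(A;B;C)` where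
`I(A;B;C) = dim(A+B+C) − dim(A+B) − dim(A+C) − dim(B+C) + dim A + dim B + dim C`;
(2) `DisCoord(A,B,C) = dim(C∩(A+B)) − dim(C∩A) − dim(C∩B) + dim(A∩B∩C)`;
(3) `DisCoord(A,B,C) = dim((A+C)∩(B+C)) − dim((A∩B)+C)`. -/
theorem disCoord_three_formulas {𝔽 U : Type*} [Field 𝔽] [AddCommGroup U] [Module 𝔽 U]
    [FiniteDimensional 𝔽 U] (A B C : Submodule 𝔽 U) :
    ((DisCoord 𝔽 ![A, B, C] : ℤ) =
      (Module.finrank 𝔽 ↥(A ⊓ B ⊓ C) : ℤ) -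
        ((Module.finrank 𝔽 ↥(A ⊔ B ⊔ C) : ℤ) -
          (Module.finrank 𝔽 ↥(A ⊔ B) : ℤ) - (Module.finrank 𝔽 ↥(A ⊔ C) : ℤ) -
          (Module.finrank 𝔽 ↥(B ⊔ C) : ℤ) +
          (Module.finrank 𝔽 ↥A : ℤ) + (Module.finrank 𝔽 ↥B : ℤ) +
          (Module.finrank 𝔽 ↥C : ℤ))) ∧
    ((DisCoord 𝔽 ![A, B, C] : ℤ) =
      (Module.finrank 𝔽 ↥(C ⊓ (A ⊔ B)) : ℤ) - (Module.finrank 𝔽 ↥(C ⊓ A) : ℤ) -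
        (Module.finrank 𝔽 ↥(C ⊓ B) : ℤ) + (Module.finrank 𝔽 ↥(A ⊓ B ⊓ C) : ℤ)) ∧
    ((DisCoord 𝔽 ![A, B, C] : ℤ) =
      (Module.finrank 𝔽 ↥((A ⊔ C) ⊓ (B ⊔ C)) : ℤ) -
        (Module.finrank 𝔽 ↥((A ⊓ B) ⊔ C) : ℤ)) := by
  have hmain := DC.disCoord_eq A B C
  have hmono : finrank 𝔽 ↥((A ⊓ B) ⊔ C) ≤ finrank 𝔽 ↥((A ⊔ C) ⊓ (B ⊔ C)) :=
    Submodule.finrank_mono (sup_le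
      (le_inf (inf_le_left.trans le_sup_left) (inf_le_right.trans le_sup_left))
      (le_inf le_sup_right le_sup_right))
  have f1 := Submodule.finrank_sup_add_finrank_inf_eq A B
  have f2 := Submodule.finrank_sup_add_finrank_inf_eq A C
  have f3 := Submodule.finrank_sup_add_finrank_inf_eq B C
  have f5 := Submodule.finrank_sup_add_finrank_inf_eq (A ⊔ B) C
  have f6 := Submodule.finrank_sup_add_finrank_inf_eq (A ⊔ C) (B ⊔ C)
  have e6 : (A ⊔ C) ⊔ (B ⊔ C) = A ⊔ B ⊔ C := by rw [sup_sup_sup_comm, sup_idem]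
  rw [e6] at f6
  have f7 := Submodule.finrank_sup_add_finrank_inf_eq (A ⊓ B) C
  have g1 : finrank 𝔽 ↥(C ⊓ (A ⊔ B)) = finrank 𝔽 ↥((A ⊔ B) ⊓ C) := by rw [inf_comm]
  have g2 : finrank 𝔽 ↥(C ⊓ A) = finrank 𝔽 ↥(A ⊓ C) := by rw [inf_comm]
  have g3 : finrank 𝔽 ↥(C ⊓ B) = finrank 𝔽 ↥(B ⊓ C) := by rw [inf_comm]
  refine ⟨?_, ?_, ?_⟩ <;> rw [hmain] <;> omega
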